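/- Let μ > 0, A ∈ ℝ^{m×n}, Q = μI + [[0, Aᵀ],[−A, 0]], and G_nag = [[−I, I],[I − Q/μ, −I]]. If ‖A‖ > 2μ, then G_nag has an eigenvalue with strictly positive real part; specifically, for any eigenvalue δ* of AᵀA with δ* > 4μ², λ* = −1 + √(√δ*/(2μ)) ± i√(√δ*/(2μ)) is an eigenvalue of G_nag with Re(λ*) > 0. -/

import Mathlib

open Matrix

/-- The matrix `Q = μI + [[0, Aᵀ],[−A, 0]]` of the quadratic game. -/
noncomputable def Qgame {n m : ℕ} (μ : ℝ) (A : Matrix (Fin m) (Fin n) ℝ) :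
    Matrix (Fin n ⊕ Fin m) (Fin n ⊕ Fin m) ℝ :=
  μ • (1 : Matrix (Fin n ⊕ Fin m) (Fin n ⊕ Fin m) ℝ) + Matrix.fromBlocks 0 Aᵀ (-A) 0

/-- The naive accelerated model matrix `G_nag = [[−I, I],[I − Q/μ, −I]]`. -/
noncomputable def Gnag {n m : ℕ} (μ : ℝ) (A : Matrix (Fin m) (Fin n) ℝ) :
    Matrix ((Fin n ⊕ Fin m) ⊕ (Fin n ⊕ Fin m)) ((Fin n ⊕ Fin m) ⊕ (Fin n ⊕ Fin m)) ℝ :=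
  Matrix.fromBlocks (-1) 1 (1 - μ⁻¹ • Qgame μ A) (-1)

/-- The spectral (ℓ²-operator) norm of a real matrix. -/
noncomputable def spectralNormReal {n m : ℕ} (A : Matrix (Fin m) (Fin n) ℝ) : ℝ :=
  ‖LinearMap.toContinuousLinearMap (Matrix.toEuclideanLin A)‖

section SpecHelpers
variable {N : Type*} [Fintype N] [DecidableEq N]

lemma mem_spectrum_of_mulVec_eq {M : Matrix N N ℂ} {lam : ℂ} {v : N → ℂ}
    (hv : v ≠ 0) (h : M *ᵥ v = lam • v) : lam ∈ spectrum ℂ M := by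
  rw [spectrum.mem_iff]
  intro hu
  have hdet : (algebraMap ℂ (Matrix N N ℂ) lam - M).det ≠ 0 :=
    isUnit_iff_ne_zero.mp ((Matrix.isUnit_iff_isUnit_det _).mp hu)
  apply hdet
  rw [← Matrix.exists_mulVec_eq_zero_iff]
  refine ⟨v, hv, ?_⟩
  rw [Matrix.sub_mulVec, Algebra.algebraMap_eq_smul_one lam, Matrix.smul_mulVec,
    Matrix.one_mulVec, h, sub_self]

lemma exists_eig_of_mem_spectrum {M : Matrix N N ℂ} {lam : ℂ}
    (h : lam ∈ spectrum ℂ M) : ∃ v : N → ℂ, v ≠ 0 ∧ M *ᵥ v = lam • v := by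
  rw [spectrum.mem_iff] at h
  have hdet : (algebraMap ℂ (Matrix N N ℂ) lam - M).det = 0 := by
    by_contra hd
    exact h ((Matrix.isUnit_iff_isUnit_det _).mpr (isUnit_iff_ne_zero.mpr hd))
  obtain ⟨v, hv, hv0⟩ := (Matrix.exists_mulVec_eq_zero_iff).mpr hdet
  refine ⟨v, hv, ?_⟩
  rw [Matrix.sub_mulVec, Algebra.algebraMap_eq_smul_one lam, Matrix.smul_mulVec,
    Matrix.one_mulVec] at hv0
  exact (sub_eq_zero.mp hv0).symm

end SpecHelpers

lemma map_smul_ofReal {k l : Type*} (r : ℝ) (M : Matrix k l ℝ) :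
    (r • M).map (Complex.ofReal) = (r : ℂ) • M.map Complex.ofReal := by
  ext i j
  simp [Matrix.map_apply]

lemma Gnag_map_eq {n m : ℕ} (μ : ℝ) (hμ : 0 < μ) (A : Matrix (Fin m) (Fin n) ℝ) :
    (Gnag μ A).map Complex.ofReal =
      Matrix.fromBlocks (-1) 1
        (-(μ:ℂ)⁻¹ • Matrix.fromBlocks 0 (A.map Complex.ofReal)ᵀ (-(A.map Complex.ofReal)) 0)
        (-1) := by
  have hB : (1 : Matrix (Fin n ⊕ Fin m) (Fin n ⊕ Fin m) ℝ) - μ⁻¹ • Qgame μ A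
      = (-μ⁻¹) • Matrix.fromBlocks 0 Aᵀ (-A) 0 := by
    rw [Qgame, smul_add, smul_smul, inv_mul_cancel₀ hμ.ne', one_smul]
    module
  rw [Gnag, hB, Matrix.fromBlocks_map, map_smul_ofReal]
  have h1 : ((1 : Matrix (Fin n ⊕ Fin m) (Fin n ⊕ Fin m) ℝ)).map Complex.ofReal = 1 :=
    Matrix.map_one _ (by simp) (by simp)
  have hneg1 : ∀ (K : Type) [Fintype K] [DecidableEq K],
      ((-1 : Matrix K K ℝ)).map Complex.ofReal = -1 := by
    intro K _ _
    ext i j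
    simp [Matrix.map_apply, Matrix.one_apply]
    split_ifs <;> simp
  rw [hneg1, h1, Matrix.fromBlocks_map]
  have hz1 : (0 : Matrix (Fin n) (Fin n) ℝ).map Complex.ofReal = 0 := by
    ext i j; simp [Matrix.map_apply]
  have hz2 : (0 : Matrix (Fin m) (Fin m) ℝ).map Complex.ofReal = 0 := by
    ext i j; simp [Matrix.map_apply]
  have hnegA : (-A).map Complex.ofReal = -(A.map Complex.ofReal) := by
    ext i j; simp [Matrix.map_apply]
  rw [hz1, hz2, hnegA, Matrix.transpose_map]
  push_cast
  rfl

lemma key_spec {n m : ℕ} (μ : ℝ) (hμ : 0 < μ) (A : Matrix (Fin m) (Fin n) ℝ) (δs : ℝ)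
    (hmem : (δs : ℂ) ∈ spectrum ℂ ((Aᵀ * A).map Complex.ofReal)) (hδ : δs > 4 * μ^2) :
    (((-1 + Real.sqrt (Real.sqrt δs / (2*μ)) : ℝ) : ℂ)
        + Complex.I * (Real.sqrt (Real.sqrt δs / (2*μ)) : ℝ)
        ∈ spectrum ℂ ((Gnag μ A).map Complex.ofReal)) ∧
    (((-1 + Real.sqrt (Real.sqrt δs / (2*μ)) : ℝ) : ℂ)
        - Complex.I * (Real.sqrt (Real.sqrt δs / (2*μ)) : ℝ)
        ∈ spectrum ℂ ((Gnag μ A).map Complex.ofReal)) ∧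
    0 < -1 + Real.sqrt (Real.sqrt δs / (2*μ)) := by
  set s := Real.sqrt (Real.sqrt δs / (2*μ)) with hs
  have hδ0 : 0 < δs := lt_trans (by positivity) hδ
  have hsqrt : Real.sqrt δs > 2*μ := by
    nlinarith [Real.sq_sqrt hδ0.le, Real.sqrt_nonneg δs]
  have hs2 : s^2 = Real.sqrt δs / (2*μ) := Real.sq_sqrt (by positivity)
  have h2ms : 2*μ*s^2 = Real.sqrt δs := by rw [hs2]; field_simp
  have hs0 : 0 ≤ s := Real.sqrt_nonneg _
  have hs2gt : 1 < s^2 := by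
    rw [hs2, lt_div_iff₀ (by positivity)]; linarith
  have hs1 : 1 < s := by
    have h := lt_of_pow_lt_pow_left₀ 2 hs0 (a := 1) (by rw [one_pow]; exact hs2gt)
    exact h
  have hμC : (μ:ℂ) ≠ 0 := Complex.ofReal_ne_zero.mpr hμ.ne'
  have main : ∀ ε : ℂ, ε^2 = -1 →
      (((-1 + s : ℝ) : ℂ) + ε * (s:ℝ)) ∈ spectrum ℂ ((Gnag μ A).map Complex.ofReal) := by
    intro ε hε
    obtain ⟨u, hu0, hu⟩ := exists_eig_of_mem_spectrum hmem
    set Ac := A.map Complex.ofReal with hAc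
    have hAA : (Aᵀ * A).map Complex.ofReal = Acᵀ * Ac := by
      ext i j
      simp only [Matrix.map_apply, Matrix.mul_apply, Matrix.transpose_apply, hAc]
      push_cast
      rfl
    set c : ℂ := (s:ℂ) * (1 + ε) with hc
    set lam : ℂ := ((-1 + s : ℝ) : ℂ) + ε * (s:ℝ) with hlam
    have hclam : c = 1 + lam := by rw [hc, hlam]; push_cast; ring
    set β : ℂ := -(μ:ℂ) * c^2 with hβdef
    have hβ : β = -((Real.sqrt δs : ℝ) : ℂ) * ε := by
      rw [hβdef, hc, ← h2ms]; push_cast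
      linear_combination (-(μ:ℂ) * (s:ℂ)^2) * hε
    have hδC : ((Real.sqrt δs : ℝ) : ℂ)^2 = (δs : ℂ) := by
      rw [← Complex.ofReal_pow, Real.sq_sqrt hδ0.le]
    have hβsq : β^2 = -(δs:ℂ) := by
      rw [hβ]; linear_combination ε^2 * hδC + (δs:ℂ) * hε
    have hβ0 : β ≠ 0 := by
      intro h0
      rw [h0] at hβsq
      have h00 : (δs:ℂ) = 0 := by linear_combination hβsq
      exact absurd (Complex.ofReal_eq_zero.mp h00) hδ0.ne'
    set w : Fin m → ℂ := (-β⁻¹) • (Ac *ᵥ u) with hw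
    set x : (Fin n ⊕ Fin m) → ℂ := Sum.elim u w with hx
    rw [hAA] at hu
    have h1 : Acᵀ *ᵥ w = β • u := by
      have hco : -β⁻¹ * (δs:ℂ) = β := by
        field_simp
        linear_combination -hβsq
      rw [hw, Matrix.mulVec_smul, Matrix.mulVec_mulVec, hu, smul_smul, hco]
    have h2 : (-Ac) *ᵥ u = β • w := by
      rw [Matrix.neg_mulVec, hw, smul_smul, mul_neg, mul_inv_cancel₀ hβ0, neg_one_smul]
    have hBx : (Matrix.fromBlocks 0 Acᵀ (-Ac) 0) *ᵥ x = β • x := by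
      rw [hx, Matrix.fromBlocks_mulVec]
      funext i
      cases i <;>
        simp [Matrix.zero_mulVec, h1, h2]
    set z : ((Fin n ⊕ Fin m) ⊕ (Fin n ⊕ Fin m)) → ℂ := Sum.elim x (c • x) with hz
    have hz0 : z ≠ 0 := by
      intro h
      apply hu0
      funext i
      have := congrFun h (Sum.inl (Sum.inl i))
      simpa [hz, hx] using this
    have hGz : ((Gnag μ A).map Complex.ofReal) *ᵥ z = lam • z := by
      rw [Gnag_map_eq μ hμ A, hz, Matrix.fromBlocks_mulVec]
      have hcl : (Sum.elim x (c • x) ∘ Sum.inl) = x := rfl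
      have hcr : (Sum.elim x (c • x) ∘ Sum.inr) = c • x := rfl
      rw [hcl, hcr]
      have htop : (-1 : Matrix (Fin n ⊕ Fin m) (Fin n ⊕ Fin m) ℂ) *ᵥ x
          + (1 : Matrix (Fin n ⊕ Fin m) (Fin n ⊕ Fin m) ℂ) *ᵥ (c • x) = lam • x := by
        rw [Matrix.neg_mulVec, Matrix.one_mulVec, Matrix.one_mulVec, hclam]
        module
      have hbot : (-(μ:ℂ)⁻¹ • Matrix.fromBlocks 0 Acᵀ (-Ac) 0) *ᵥ x
          + (-1 : Matrix (Fin n ⊕ Fin m) (Fin n ⊕ Fin m) ℂ) *ᵥ (c • x) = lam • (c • x) := by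
        rw [Matrix.smul_mulVec, hBx, Matrix.neg_mulVec, Matrix.one_mulVec,
          smul_smul, smul_smul]
        have hcoef : -(μ:ℂ)⁻¹ * β = lam * c + c := by
          rw [hβdef, hclam]; field_simp; ring
        rw [hcoef]
        module
      rw [htop, hbot]
      funext i
      cases i <;> simp
    exact mem_spectrum_of_mulVec_eq hz0 hGz
  refine ⟨main Complex.I (by rw [Complex.I_sq]), ?_, by linarith⟩
  have h2 := main (-Complex.I) (by rw [neg_sq, Complex.I_sq])
  simpa [sub_eq_add_neg, neg_mul] using h2

lemma ofReal_mem_spectrum {N : Type*} [Fintype N] [DecidableEq N]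
    (M : Matrix N N ℝ) (t : ℝ) (v : N → ℝ) (hv : v ≠ 0) (h : M *ᵥ v = t • v) :
    (t : ℂ) ∈ spectrum ℂ (M.map Complex.ofReal) := by
  apply mem_spectrum_of_mulVec_eq (v := fun i => ((v i : ℝ) : ℂ))
  · intro h0
    apply hv
    funext i
    have := congrFun h0 i
    simpa using this
  · funext i
    have hi := congrFun h i
    simp only [Matrix.mulVec, dotProduct, Pi.smul_apply, smul_eq_mul,
      Matrix.map_apply] at hi ⊢
    exact_mod_cast congrArg Complex.ofReal hi

open scoped InnerProductSpace in
set_option maxHeartbeats 1000000 in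
lemma exists_big_eigenvalue {n m : ℕ} (μ : ℝ) (hμ : 0 < μ)
    (A : Matrix (Fin m) (Fin n) ℝ) (hA : spectralNormReal A > 2 * μ) :
    ∃ t : ℝ, t > 4 * μ^2 ∧ ∃ v : Fin n → ℝ, v ≠ 0 ∧ (Aᵀ * A) *ᵥ v = t • v := by
  classical
  rcases Nat.eq_zero_or_pos n with hn | hn
  · exfalso
    subst hn
    haveI : Subsingleton (EuclideanSpace ℝ (Fin 0)) :=
      ⟨fun a b => PiLp.ext fun i => i.elim0⟩
    have h0 : Matrix.toEuclideanLin A = 0 := by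
      apply LinearMap.ext
      intro x
      rw [Subsingleton.elim x 0, map_zero, map_zero]
    have : spectralNormReal A = 0 := by
      rw [spectralNormReal, h0, map_zero, norm_zero]
    linarith
  haveI : Nonempty (Fin n) := ⟨⟨0, hn⟩⟩
  haveI : Nontrivial (EuclideanSpace ℝ (Fin n)) := by
    refine ⟨0, (WithLp.equiv 2 (Fin n → ℝ)).symm (fun _ => 1), fun hcon => ?_⟩
    have h1 := congrFun (congrArg (WithLp.equiv 2 (Fin n → ℝ)) hcon) ⟨0, hn⟩
    have h2 : (0 : ℝ) = 1 := h1
    exact zero_ne_one h2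
  set L : EuclideanSpace ℝ (Fin n) →ₗ[ℝ] EuclideanSpace ℝ (Fin m) :=
    Matrix.toEuclideanLin A with hL
  set T : EuclideanSpace ℝ (Fin n) →ₗ[ℝ] EuclideanSpace ℝ (Fin n) :=
    Matrix.toEuclideanLin (Aᵀ * A) with hT
  have htrans : Aᴴ = Aᵀ := by
    ext i j
    simp [Matrix.conjTranspose_apply]
  have hadj : Matrix.toEuclideanLin Aᵀ = LinearMap.adjoint L := by
    rw [hL, ← Matrix.toEuclideanLin_conjTranspose_eq_adjoint, htrans]
  have hTx : ∀ x, T x = LinearMap.adjoint L (L x) := by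
    intro x
    rw [hT, ← hadj]
    have hcomp : Matrix.toEuclideanLin (Aᵀ * A) =
        (Matrix.toEuclideanLin Aᵀ).comp (Matrix.toEuclideanLin A) := by
      rw [Matrix.toEuclideanLin_eq_toLin]
      exact Matrix.toLin_mul (PiLp.basisFun 2 ℝ (Fin n)) (PiLp.basisFun 2 ℝ (Fin m))
        (PiLp.basisFun 2 ℝ (Fin n)) Aᵀ A
    rw [hcomp]
    rfl
  have hsym : T.IsSymmetric := by
    intro x y
    rw [hTx, hTx, LinearMap.adjoint_inner_left, LinearMap.adjoint_inner_right]
  have hinner : ∀ x, ⟪T x, x⟫_ℝ = ‖L x‖^2 := by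
    intro x
    rw [hTx, LinearMap.adjoint_inner_left, real_inner_self_eq_norm_sq]
  set Acl : EuclideanSpace ℝ (Fin n) →L[ℝ] EuclideanSpace ℝ (Fin m) :=
    LinearMap.toContinuousLinearMap L with hAcl
  have hAclL : ∀ x, Acl x = L x := fun x => rfl
  set s : ℝ := ⨆ x : {x : EuclideanSpace ℝ (Fin n) // x ≠ 0},
      RCLike.re ⟪T x, x⟫_ℝ / ‖(x : EuclideanSpace ℝ (Fin n))‖^2 with hs
  have hbdd : BddAbove (Set.range fun x : {x : EuclideanSpace ℝ (Fin n) // x ≠ 0} =>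
      RCLike.re ⟪T x, x⟫_ℝ / ‖(x : EuclideanSpace ℝ (Fin n))‖^2) := by
    refine ⟨‖Acl‖^2, ?_⟩
    rintro y ⟨⟨x, hx⟩, rfl⟩
    have hx0 : 0 < ‖x‖ := norm_pos_iff.mpr hx
    simp only [RCLike.re_to_real]
    rw [hinner, div_le_iff₀ (by positivity)]
    have h1 := Acl.le_opNorm x
    rw [hAclL] at h1
    nlinarith [norm_nonneg (L x), Acl.opNorm_nonneg]
  have heig : Module.End.HasEigenvalue T (s : ℝ) :=
    hsym.hasEigenvalue_iSup_of_finiteDimensional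
  obtain ⟨v, hv⟩ := heig.exists_hasEigenvector
  have hkey : ∀ x, ‖L x‖^2 ≤ s * ‖x‖^2 := by
    intro x
    by_cases hx : x = 0
    · simp [hx]
    · have hle : RCLike.re ⟪T x, x⟫_ℝ / ‖x‖^2 ≤ s :=
        le_ciSup hbdd (⟨x, hx⟩ : {x : EuclideanSpace ℝ (Fin n) // x ≠ 0})
      simp only [RCLike.re_to_real] at hle
      rw [hinner] at hle
      have hx0 : 0 < ‖x‖ := norm_pos_iff.mpr hx
      rw [div_le_iff₀ (by positivity)] at hle
      linarith
  have hs0 : 0 ≤ s := by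
    have h1 := hkey v
    have hv0 : 0 < ‖v‖ := norm_pos_iff.mpr hv.right
    nlinarith [sq_nonneg ‖L v‖, pow_pos hv0 2]
  have hnorm_le : spectralNormReal A ≤ Real.sqrt s := by
    rw [spectralNormReal]
    refine ContinuousLinearMap.opNorm_le_bound _ (Real.sqrt_nonneg s) ?_
    intro x
    have h1 : ‖L x‖^2 ≤ (Real.sqrt s * ‖x‖)^2 := by
      rw [mul_pow, Real.sq_sqrt hs0]
      exact hkey x
    calc ‖LinearMap.toContinuousLinearMap L x‖
        = Real.sqrt (‖L x‖^2) := by rw [Real.sqrt_sq (norm_nonneg _)]; rfl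
      _ ≤ Real.sqrt ((Real.sqrt s * ‖x‖)^2) := Real.sqrt_le_sqrt h1
      _ = Real.sqrt s * ‖x‖ := Real.sqrt_sq (by positivity)
  have hs4 : s > 4 * μ^2 := by
    have h1 : 2 * μ < Real.sqrt s := lt_of_lt_of_le hA hnorm_le
    nlinarith [Real.sq_sqrt hs0, Real.sqrt_nonneg s]
  refine ⟨s, hs4, WithLp.equiv 2 (Fin n → ℝ) v, ?_, ?_⟩
  · intro h0
    apply hv.right
    have h1 := congrArg (WithLp.equiv 2 (Fin n → ℝ)).symm h0
    simpa using h1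
  · have happ : T v = s • v := hv.apply_eq_smul
    have h1 := congrArg (WithLp.equiv 2 (Fin n → ℝ)) happ
    rw [hT] at h1
    simpa using h1

/-- If `‖A‖ > 2μ`, then `G_nag` has an eigenvalue with strictly positive real
part; specifically, for any eigenvalue `δ*` of `AᵀA` with `δ* > 4μ²`, the numbers
`λ* = −1 + √(√δ*/(2μ)) ± i√(√δ*/(2μ))` are eigenvalues of `G_nag` with
`Re(λ*) > 0`. -/
theorem Gnag_unstable {n m : ℕ} (μ : ℝ) (hμ : 0 < μ)
    (A : Matrix (Fin m) (Fin n) ℝ) (hA : spectralNormReal A > 2 * μ) :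
    (∃ lam ∈ spectrum ℂ ((Gnag μ A).map Complex.ofReal), 0 < lam.re) ∧
    ∀ δs : ℝ, (δs : ℂ) ∈ spectrum ℂ ((Aᵀ * A).map Complex.ofReal) → δs > 4 * μ^2 →
      (((-1 + Real.sqrt (Real.sqrt δs / (2*μ)) : ℝ) : ℂ)
          + Complex.I * (Real.sqrt (Real.sqrt δs / (2*μ)) : ℝ)
          ∈ spectrum ℂ ((Gnag μ A).map Complex.ofReal)) ∧
      (((-1 + Real.sqrt (Real.sqrt δs / (2*μ)) : ℝ) : ℂ)
          - Complex.I * (Real.sqrt (Real.sqrt δs / (2*μ)) : ℝ)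
          ∈ spectrum ℂ ((Gnag μ A).map Complex.ofReal)) ∧
      0 < -1 + Real.sqrt (Real.sqrt δs / (2*μ)) := by
  constructor
  · obtain ⟨t, ht, v, hv0, hveq⟩ := exists_big_eigenvalue μ hμ A hA
    have hmem := ofReal_mem_spectrum (Aᵀ * A) t v hv0 hveq
    obtain ⟨h1, _, h3⟩ := key_spec μ hμ A t hmem ht
    refine ⟨_, h1, ?_⟩
    have hre : (((-1 + Real.sqrt (Real.sqrt t / (2*μ)) : ℝ) : ℂ)
        + Complex.I * (Real.sqrt (Real.sqrt t / (2*μ)) : ℝ)).re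
        = -1 + Real.sqrt (Real.sqrt t / (2*μ)) := by
      simp only [Complex.add_re, Complex.ofReal_re, Complex.mul_re, Complex.I_re,
        Complex.I_im, Complex.ofReal_im, zero_mul, one_mul, mul_zero, sub_zero, add_zero]
    rw [hre]
    exact h3
  · intro δs hmem hδ
    exact key_spec μ hμ A δs hmem hδ
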